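/- Let M be an n×n self-adjoint positive semi-definite complex matrix with constant diagonal, M_{j,j} = c for all j. Then the matrix with entries |M_{j,k}|² − c²/n is positive semi-definite. -/

import Mathlib

open scoped ComplexOrder
open Matrix

/-- If `M` is self-adjoint positive semi-definite with constant diagonal `c`, then the matrix
with entries `|M j k|^2 - c^2/n` is positive semi-definite. -/
theorem schur_variant_const_diag (n : ℕ) (M : Matrix (Fin n) (Fin n) ℂ)
    (hM : M.PosSemidef) (c : ℝ) (hdiag : ∀ j, M j j = (c : ℂ)) :
    Matrix.PosSemidef (Matrix.of fun j k : Fin n =>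
      ((‖M j k‖) ^ 2 : ℂ) - (c ^ 2 / n : ℂ)) := by
  classical
  obtain ⟨A, hA⟩ : ∃ A : Matrix (Fin n) (Fin n) ℂ, M = Aᴴ * A := by
    open scoped MatrixOrder in
    obtain ⟨B, hB⟩ := CStarAlgebra.nonneg_iff_eq_star_mul_self.mp hM.nonneg
    exact ⟨B, hB⟩
  have hherm := hM.1
  have hsym : ∀ j k, (starRingEnd ℂ) (M j k) = M k j := by
    intro j k
    conv_rhs => rw [← hherm.eq]
    rfl
  refine Matrix.PosSemidef.of_dotProduct_mulVec_nonneg ?_ ?_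
  · ext j k
    simp only [Matrix.conjTranspose_apply, Matrix.of_apply]
    have habs : ‖M k j‖ = ‖M j k‖ := by
      rw [← hsym j k, Complex.norm_conj]
    rw [habs]
    simp [map_sub, Complex.conj_ofReal, map_div₀, map_pow, Complex.conj_natCast]
  · intro x
    set D : Matrix (Fin n) (Fin n) ℂ := Matrix.diagonal x with hD
    set B : Matrix (Fin n) (Fin n) ℂ := A * D * Aᴴ with hB
    set s : ℂ := ∑ j, x j with hs
    have hAM : Aᴴ * A = M := hA.symm
    have habs2 : ∀ j k, ((‖M j k‖) ^ 2 : ℂ) = M j k * M k j := by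
      intro j k
      rw [← hsym j k, Complex.mul_conj]
      norm_cast
      exact Complex.sq_norm _
    -- split the quadratic form into two double sums
    have hquad : star x ⬝ᵥ (Matrix.of fun j k : Fin n =>
        ((‖M j k‖) ^ 2 : ℂ) - (c ^ 2 / n : ℂ)).mulVec x
        = (∑ j, ∑ k, (starRingEnd ℂ) (x j) * (M j k * M k j) * x k)
          - ∑ j, ∑ k, ((c : ℂ) ^ 2 / n) * ((starRingEnd ℂ) (x j) * x k) := by
      simp only [dotProduct, Matrix.mulVec, Pi.star_apply, Matrix.of_apply,
        RCLike.star_def, Finset.mul_sum, ← Finset.sum_sub_distrib]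
      refine Finset.sum_congr rfl fun j _ => Finset.sum_congr rfl fun k _ => ?_
      rw [habs2]
      ring
    -- second double sum
    have hQ : (∑ j, ∑ k, ((c : ℂ) ^ 2 / n) * ((starRingEnd ℂ) (x j) * x k))
        = ((c : ℂ) ^ 2 / n) * ((starRingEnd ℂ) s * s) := by
      rw [hs, map_sum, Finset.sum_mul_sum]
      simp [Finset.mul_sum]
    -- first double sum equals trace (Dᴴ * M * D * M)
    have hDM : ∀ j k, (Dᴴ * M * D) j k = (starRingEnd ℂ) (x j) * M j k * x k := by
      intro j k
      rw [hD, Matrix.diagonal_conjTranspose, Matrix.mul_diagonal, Matrix.diagonal_mul]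
      simp [mul_comm, mul_assoc, mul_left_comm]
    have htr1 : (∑ j, ∑ k, (starRingEnd ℂ) (x j) * (M j k * M k j) * x k)
        = (Dᴴ * M * D * M).trace := by
      rw [Matrix.trace]
      refine Finset.sum_congr rfl fun j _ => ?_
      rw [Matrix.diag_apply, Matrix.mul_apply]
      refine Finset.sum_congr rfl fun k _ => ?_
      rw [hDM]
      ring
    -- trace (Dᴴ M D M) = trace (Bᴴ B)
    have hBB : Bᴴ * B = A * (Dᴴ * M * D) * Aᴴ := by
      rw [hB, ← hAM]
      simp only [Matrix.conjTranspose_mul, Matrix.conjTranspose_conjTranspose,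
        Matrix.mul_assoc]
    have htr2 : (Bᴴ * B).trace = (Dᴴ * M * D * M).trace := by
      rw [hBB, Matrix.trace_mul_cycle, hAM, Matrix.trace_mul_comm]
    -- trace (Bᴴ B) is a sum of normSq's
    have htr3 : (Bᴴ * B).trace = ((∑ i, ∑ l, Complex.normSq (B l i) : ℝ) : ℂ) := by
      rw [Matrix.trace]
      push_cast
      refine Finset.sum_congr rfl fun i _ => ?_
      rw [Matrix.diag_apply, Matrix.mul_apply]
      refine Finset.sum_congr rfl fun l _ => ?_
      rw [Matrix.conjTranspose_apply, RCLike.star_def, ← Complex.normSq_eq_conj_mul_self]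
    -- trace B = c * s
    have hT : B.trace = (c : ℂ) * s := by
      rw [hB, Matrix.trace_mul_cycle, hAM, hs, Finset.mul_sum, Matrix.trace]
      refine Finset.sum_congr rfl fun j _ => ?_
      rw [Matrix.diag_apply, hD, Matrix.mul_diagonal, hdiag]
    -- the subtracted term equals normSq (trace B) / n
    have hQ2 : ((c : ℂ) ^ 2 / n) * ((starRingEnd ℂ) s * s)
        = ((Complex.normSq B.trace / n : ℝ) : ℂ) := by
      rw [hT, Complex.normSq_mul, Complex.normSq_ofReal]
      rw [← Complex.normSq_eq_conj_mul_self]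
      push_cast
      ring
    rw [hquad, hQ, htr1, ← htr2, htr3, hQ2, ← Complex.ofReal_sub, Complex.zero_le_real]
    rw [sub_nonneg]
    -- the real Cauchy–Schwarz estimate
    have h1 : ‖B.trace‖ ≤ ∑ i, ‖B i i‖ := by
      rw [Matrix.trace]
      exact norm_sum_le _ _
    have h2 : Complex.normSq B.trace ≤ (n : ℝ) * ∑ i, Complex.normSq (B i i) := by
      calc Complex.normSq B.trace = ‖B.trace‖ ^ 2 := (Complex.sq_norm _).symm
        _ ≤ (∑ i, ‖B i i‖) ^ 2 := by
            exact pow_le_pow_left₀ (norm_nonneg _) h1 2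
        _ ≤ (Finset.univ.card : ℝ) * ∑ i, ‖B i i‖ ^ 2 :=
            sq_sum_le_card_mul_sum_sq
        _ = (n : ℝ) * ∑ i, Complex.normSq (B i i) := by
            simp [Complex.sq_norm]
    have h3 : (∑ i, Complex.normSq (B i i)) ≤ ∑ i, ∑ l, Complex.normSq (B l i) :=
      Finset.sum_le_sum fun i _ =>
        Finset.single_le_sum (f := fun l => Complex.normSq (B l i))
          (fun l _ => Complex.normSq_nonneg _) (Finset.mem_univ i)
    rcases Nat.eq_zero_or_pos n with hn | hn
    · subst hn
      simp [Matrix.trace]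
    · rw [div_le_iff₀ (by exact_mod_cast hn)]
      calc Complex.normSq B.trace ≤ (n : ℝ) * ∑ i, Complex.normSq (B i i) := h2
        _ ≤ (n : ℝ) * ∑ i, ∑ l, Complex.normSq (B l i) := by
            exact mul_le_mul_of_nonneg_left h3 (by positivity)
        _ = (∑ i, ∑ l, Complex.normSq (B l i)) * n := by ring
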